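/- Any countable linear order L with successor relation S that satisfies: (i) L is a linear order with no least or greatest element, (ii) S(x,y) holds iff y is the immediate successor of x, and (iii) there exists a point x such that below x the order is dense-in-itself from the left at x, above x the order is dense and no element above x has a predecessor, and below x every element is matched into a successor pair where the lower element has a successor and no predecessor — is isomorphic to 2·ℚ + 1 + ℚ with its successor relation. -/

import Mathlib

open scoped Lex

/-- `S x y`: `y` is the immediate successor of `x`. -/
def Succ' {M : Type*} [LinearOrder M] (x y : M) : Prop :=
  x < y ∧ ∀ z, ¬ (x < z ∧ z < y)

/-- The linear order `2·ℚ + 1 + ℚ`: ℚ-many adjacent pairs, a single point, then a copy of ℚ. -/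
abbrev TwoQOneQ : Type := (ℚ ×ₗ Bool) ⊕ₗ (PUnit ⊕ₗ ℚ)

/-- Any countable linear order without endpoints satisfying the sentence (★) is isomorphic
to `2·ℚ + 1 + ℚ` (an order isomorphism automatically respects the successor relation, which
is definable from the order). -/
theorem statement11 (M : Type) [Countable M] [LinearOrder M]
    (hnomin : ∀ a : M, ∃ b, b < a) (hnomax : ∀ a : M, ∃ b, a < b)
    (hstar : ∃ x : M,
      (∀ y, y < x → ∃ z, y < z ∧ z < x) ∧
      (∀ y, x < y → (∃ z, x < z ∧ z < y) ∧ (∀ u, x < u → ¬ Succ' y u)) ∧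
      (∀ y, y < x → (∃ z, Succ' y z ∨ Succ' z y) ∧
        ((∃ u, Succ' y u) → ∀ v, ¬ Succ' v y))) :
    Nonempty (M ≃o TwoQOneQ) := by
  classical
  obtain ⟨x, hd1, hd2, hd3⟩ := hstar
  have succ_le : ∀ {a b c : M}, Succ' a b → a < c → b ≤ c := fun h hac =>
    le_of_not_gt fun hcb => h.2 _ ⟨hac, hcb⟩
  have pred_ge : ∀ {a b c : M}, Succ' a b → c < b → c ≤ a := fun h hcb =>
    le_of_not_gt fun hac => h.2 _ ⟨hac, hcb⟩
  have pred_unique : ∀ {p q m : M}, Succ' p m → Succ' q m → p = q := fun hp hq =>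
    le_antisymm (pred_ge hq hp.1) (pred_ge hp hq.1)
  have succ_lt_x : ∀ {m s : M}, m < x → Succ' m s → s < x := by
    intro m s hm hs
    obtain ⟨w, hw1, hw2⟩ := hd1 m hm
    exact lt_of_le_of_lt (succ_le hs hw1) hw2
  have no_succ : ∀ {p m : M}, m < x → Succ' p m → ¬∃ u, Succ' m u := by
    rintro p m hm hp ⟨u, hu⟩
    exact (hd3 m hm).2 ⟨u, hu⟩ p hp
  have exists_lower_above : ∀ s w : M, s < x → (¬∃ u, Succ' s u) → s < w → w < x →
      ∃ q, s < q ∧ q ≤ w ∧ q < x ∧ ∃ z, Succ' q z := by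
    intro s w hsx hns hsw hwx
    rcases (hd3 w hwx).1 with ⟨z, hz | hz⟩
    · exact ⟨w, hsw, le_refl w, hwx, ⟨z, hz⟩⟩
    · have hsv : s ≤ z := pred_ge hz hsw
      have hne : s ≠ z := fun e => hns ⟨w, e ▸ hz⟩
      exact ⟨z, lt_of_le_of_ne hsv hne, hz.1.le, lt_trans hz.1 hwx, ⟨w, hz⟩⟩
  have exists_lower_le : ∀ b : M, b < x → ∃ q, q ≤ b ∧ q < x ∧ ∃ z, Succ' q z := by
    intro b hb
    rcases (hd3 b hb).1 with ⟨z, hz | hz⟩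
    · exact ⟨b, le_refl b, hb, ⟨z, hz⟩⟩
    · exact ⟨z, hz.1.le, lt_trans hz.1 hb, ⟨b, hz⟩⟩
  have exists_between_of_lower : ∀ {a b : M}, a < b → b < x → (∃ z, Succ' b z) →
      ∃ w, a < w ∧ w < b := by
    intro a b hab hbx hsb
    by_contra h
    exact (hd3 b hbx).2 hsb a ⟨hab, fun w hw => h ⟨w, hw⟩⟩
  -- the lower-elements subtype
  haveI : DenselyOrdered {m : M // m < x ∧ ∃ z, Succ' m z} := by
    constructor
    rintro ⟨p1, hp1x, hs1⟩ ⟨p2, hp2x, hs2⟩ h12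
    rw [Subtype.mk_lt_mk] at h12
    obtain ⟨s1, hs1'⟩ := hs1
    have hs1x : s1 < x := succ_lt_x hp1x hs1'
    have hs1p2 : s1 ≤ p2 := succ_le hs1' h12
    have hne : s1 ≠ p2 := fun e => (hd3 p2 hp2x).2 hs2 p1 (e ▸ hs1')
    have hlt : s1 < p2 := lt_of_le_of_ne hs1p2 hne
    obtain ⟨w, hw1, hw2⟩ := exists_between_of_lower hlt hp2x hs2
    obtain ⟨q, hq1, hq2, hq3, hq4⟩ :=
      exists_lower_above s1 w hs1x (no_succ hs1x hs1') hw1 (hw2.trans hp2x)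
    exact ⟨⟨q, hq3, hq4⟩, Subtype.mk_lt_mk.2 (hs1'.1.trans hq1),
      Subtype.mk_lt_mk.2 (lt_of_le_of_lt hq2 hw2)⟩
  haveI : NoMaxOrder {m : M // m < x ∧ ∃ z, Succ' m z} := by
    constructor
    rintro ⟨p, hpx, s, hs⟩
    have hsx : s < x := succ_lt_x hpx hs
    obtain ⟨w, hw1, hw2⟩ := hd1 s hsx
    obtain ⟨q, hq1, hq2, hq3, hq4⟩ := exists_lower_above s w hsx (no_succ hsx hs) hw1 hw2
    exact ⟨⟨q, hq3, hq4⟩, Subtype.mk_lt_mk.2 (hs.1.trans hq1)⟩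
  haveI : NoMinOrder {m : M // m < x ∧ ∃ z, Succ' m z} := by
    constructor
    rintro ⟨p, hpx, hsp⟩
    obtain ⟨b, hb⟩ := hnomin p
    obtain ⟨q, h1, h2, h3⟩ := exists_lower_le b (hb.trans hpx)
    exact ⟨⟨q, h2, h3⟩, Subtype.mk_lt_mk.2 (lt_of_le_of_lt h1 hb)⟩
  haveI : Nonempty {m : M // m < x ∧ ∃ z, Succ' m z} := by
    obtain ⟨b, hb⟩ := hnomin x
    obtain ⟨q, h1, h2, h3⟩ := exists_lower_le b hb
    exact ⟨⟨q, h2, h3⟩⟩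
  -- the upper subtype
  haveI : DenselyOrdered {m : M // x < m} := by
    constructor
    rintro ⟨a, hax⟩ ⟨b, hbx⟩ hab
    rw [Subtype.mk_lt_mk] at hab
    have hns : ¬ Succ' a b := (hd2 a hax).2 b hbx
    have h2 : ¬ ∀ z, ¬ (a < z ∧ z < b) := fun hz => hns ⟨hab, hz⟩
    push_neg at h2
    obtain ⟨z, hz1, hz2⟩ := h2
    exact ⟨⟨z, hax.trans hz1⟩, Subtype.mk_lt_mk.2 hz1, Subtype.mk_lt_mk.2 hz2⟩
  haveI : NoMinOrder {m : M // x < m} := by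
    constructor
    rintro ⟨a, hax⟩
    obtain ⟨z, hz1, hz2⟩ := (hd2 a hax).1
    exact ⟨⟨z, hz1⟩, Subtype.mk_lt_mk.2 hz2⟩
  haveI : NoMaxOrder {m : M // x < m} := by
    constructor
    rintro ⟨a, hax⟩
    obtain ⟨b, hb⟩ := hnomax a
    exact ⟨⟨b, hax.trans hb⟩, Subtype.mk_lt_mk.2 hb⟩
  haveI : Nonempty {m : M // x < m} := by
    obtain ⟨b, hb⟩ := hnomax x
    exact ⟨⟨b, hb⟩⟩
  obtain ⟨f⟩ : Nonempty ({m : M // m < x ∧ ∃ z, Succ' m z} ≃o ℚ) :=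
    Order.iso_of_countable_dense _ _
  obtain ⟨g⟩ : Nonempty ({m : M // x < m} ≃o ℚ) :=
    Order.iso_of_countable_dense _ _
  have hpredex : ∀ m, m < x → ¬(∃ z, Succ' m z) →
      ∃ p : {m : M // m < x ∧ ∃ z, Succ' m z}, Succ' p.1 m := by
    intro m hm hns
    rcases (hd3 m hm).1 with ⟨z, hz | hz⟩
    · exact absurd ⟨z, hz⟩ hns
    · exact ⟨⟨z, hz.1.trans hm, ⟨m, hz⟩⟩, hz⟩
  choose lowpred lowpredspec using hpredex
  let F : M → TwoQOneQ := fun m =>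
    if h : m < x then
      if hs : ∃ z, Succ' m z then
        toLex (Sum.inl (toLex (f ⟨m, h, hs⟩, false)))
      else
        toLex (Sum.inl (toLex (f (lowpred m h hs), true)))
    else if h2 : x < m then
      toLex (Sum.inr (toLex (Sum.inr (g ⟨m, h2⟩))))
    else
      toLex (Sum.inr (toLex (Sum.inl PUnit.unit)))
  have hF1 : ∀ m (h : m < x) (hs : ∃ z, Succ' m z),
      F m = toLex (Sum.inl (toLex (f ⟨m, h, hs⟩, false))) := by
    intro m h hs
    simp only [F, dif_pos h, dif_pos hs]
  have hF2 : ∀ m (h : m < x) (hs : ¬∃ z, Succ' m z),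
      F m = toLex (Sum.inl (toLex (f (lowpred m h hs), true))) := by
    intro m h hs
    simp only [F, dif_pos h, dif_neg hs]
  have hF3 : ∀ m (h : x < m),
      F m = toLex (Sum.inr (toLex (Sum.inr (g ⟨m, h⟩)))) := by
    intro m h
    simp only [F, dif_neg (asymm h : ¬ m < x), dif_pos h]
  have hF4 : F x = toLex (Sum.inr (toLex (Sum.inl PUnit.unit))) := by
    simp only [F, dif_neg (lt_irrefl x)]
  have hmono : StrictMono F := by
    intro a b hab
    rcases lt_trichotomy a x with hax | rfl | hax
    · rcases lt_trichotomy b x with hbx | rfl | hbx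
      · by_cases hsa : ∃ z, Succ' a z <;> by_cases hsb : ∃ z, Succ' b z
        · rw [hF1 a hax hsa, hF1 b hbx hsb]
          exact Sum.Lex.inl_lt_inl_iff.2 (Prod.Lex.lt_iff.2
            (Or.inl (f.lt_iff_lt.2 (Subtype.mk_lt_mk.2 hab))))
        · rw [hF1 a hax hsa, hF2 b hbx hsb]
          have hp2 := lowpredspec b hbx hsb
          have hle : a ≤ (lowpred b hbx hsb).1 := pred_ge hp2 hab
          rcases eq_or_lt_of_le hle with he | hlt
          · refine Sum.Lex.inl_lt_inl_iff.2 (Prod.Lex.lt_iff.2 (Or.inr ⟨?_, ?_⟩))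
            · show f ⟨a, hax, hsa⟩ = f (lowpred b hbx hsb)
              congr 1
              exact Subtype.ext he
            · exact Bool.false_lt_true
          · exact Sum.Lex.inl_lt_inl_iff.2 (Prod.Lex.lt_iff.2
              (Or.inl (f.lt_iff_lt.2 (Subtype.mk_lt_mk.2 hlt))))
        · rw [hF2 a hax hsa, hF1 b hbx hsb]
          have hp1 := lowpredspec a hax hsa
          exact Sum.Lex.inl_lt_inl_iff.2 (Prod.Lex.lt_iff.2
            (Or.inl (f.lt_iff_lt.2 (Subtype.mk_lt_mk.2 (hp1.1.trans hab)))))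
        · rw [hF2 a hax hsa, hF2 b hbx hsb]
          have hp1 := lowpredspec a hax hsa
          have hp2 := lowpredspec b hbx hsb
          have hlt : (lowpred a hax hsa).1 < (lowpred b hbx hsb).1 :=
            lt_of_lt_of_le hp1.1 (pred_ge hp2 hab)
          exact Sum.Lex.inl_lt_inl_iff.2 (Prod.Lex.lt_iff.2
            (Or.inl (f.lt_iff_lt.2 (Subtype.mk_lt_mk.2 hlt))))
      · rw [hF4]
        by_cases hsa : ∃ z, Succ' a z
        · rw [hF1 a hax hsa]; exact Sum.Lex.inl_lt_inr _ _
        · rw [hF2 a hax hsa]; exact Sum.Lex.inl_lt_inr _ _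
      · rw [hF3 b hbx]
        by_cases hsa : ∃ z, Succ' a z
        · rw [hF1 a hax hsa]; exact Sum.Lex.inl_lt_inr _ _
        · rw [hF2 a hax hsa]; exact Sum.Lex.inl_lt_inr _ _
    · rw [hF4, hF3 b hab]
      exact Sum.Lex.inr_lt_inr_iff.2 (Sum.Lex.inl_lt_inr _ _)
    · have hbx : x < b := hax.trans hab
      rw [hF3 a hax, hF3 b hbx]
      exact Sum.Lex.inr_lt_inr_iff.2 (Sum.Lex.inr_lt_inr_iff.2
        (g.lt_iff_lt.2 (Subtype.mk_lt_mk.2 hab)))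
  have hsurj : Function.Surjective F := by
    intro c
    obtain ⟨s, rfl⟩ := toLex.surjective c
    rcases s with p | t
    · obtain ⟨pb, rfl⟩ := toLex.surjective p
      obtain ⟨q, b⟩ := pb
      cases b
      · refine ⟨(f.symm q).1, ?_⟩
        rw [hF1 _ (f.symm q).2.1 (f.symm q).2.2]
        rw [show (⟨(f.symm q).1, (f.symm q).2.1, (f.symm q).2.2⟩ :
          {m : M // m < x ∧ ∃ z, Succ' m z}) = f.symm q from rfl, f.apply_symm_apply]
      · obtain ⟨s, hs⟩ := (f.symm q).2.2
        have hsx : s < x := succ_lt_x (f.symm q).2.1 hs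
        have hns : ¬∃ u, Succ' s u := no_succ hsx hs
        refine ⟨s, ?_⟩
        rw [hF2 s hsx hns]
        have he : lowpred s hsx hns = f.symm q :=
          Subtype.ext (pred_unique (lowpredspec s hsx hns) hs)
        rw [he, f.apply_symm_apply]
    · obtain ⟨t', rfl⟩ := toLex.surjective t
      rcases t' with u | q
      · cases u
        exact ⟨x, hF4⟩
      · refine ⟨(g.symm q).1, ?_⟩
        rw [hF3 _ (g.symm q).2]
        rw [show (⟨(g.symm q).1, (g.symm q).2⟩ : {m : M // x < m}) = g.symm q from rfl,
          g.apply_symm_apply]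
  exact ⟨StrictMono.orderIsoOfSurjective F hmono hsurj⟩
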